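/- Let T > 0, C > 0, 0 < α ≤ 2 and M ≥ 0. Suppose E : [0,T] → ℝ is differentiable, E(t) ≥ 0 for all t ∈ [0,T], dE/dt(t) ≤ C·E(t)^α for all t ∈ [0,T], and ∫₀ᵀ E(t) dt ≤ M. Then for every t ∈ [0,T], E(t) ≤ (1 + E(0))·exp(C·(T + M)); in particular E remains bounded on [0,T] and cannot blow up. -/

import Mathlib

open Set Real

open MeasureTheory intervalIntegral in
/-- A sustained amplification rate `dE/dt ≤ C E^α` with `0 < α ≤ 2`, together with an
a priori bound on `∫₀ᵀ E`, precludes finite-time blow-up: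
`E(t) ≤ (1 + E(0)) exp(C (T + M))` on `[0,T]`. -/
theorem enstrophy_no_blowup_low_exponent
    (T C α M : ℝ) (hT : 0 < T) (hC : 0 < C) (hα₁ : 0 < α) (hα₂ : α ≤ 2) (hM : 0 ≤ M)
    (E : ℝ → ℝ)
    (hdiff : ∀ t ∈ Icc (0 : ℝ) T, DifferentiableAt ℝ E t)
    (hnonneg : ∀ t ∈ Icc (0 : ℝ) T, 0 ≤ E t)
    (hineq : ∀ t ∈ Icc (0 : ℝ) T, deriv E t ≤ C * E t ^ α)
    (hint : (∫ t in (0 : ℝ)..T, E t) ≤ M) :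
    ∀ t ∈ Icc (0 : ℝ) T, E t ≤ (1 + E 0) * Real.exp (C * (T + M)) := by
  have hcont : ContinuousOn E (Icc 0 T) := fun x hx =>
    (hdiff x hx).continuousAt.continuousWithinAt
  have hEi : IntegrableOn E (uIcc 0 T) := by
    rw [uIcc_of_le hT.le]
    exact hcont.integrableOn_compact isCompact_Icc
  set F : ℝ → ℝ := fun y => Real.log (1 + E y) - C * (y + ∫ s in (0:ℝ)..y, E s) with hF
  have hpos : ∀ y ∈ Icc (0:ℝ) T, (0:ℝ) < 1 + E y := fun y hy => by linarith [hnonneg y hy]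
  -- continuity of F on Icc
  have hFcont : ContinuousOn F (Icc 0 T) := by
    apply ContinuousOn.sub
    · apply ContinuousOn.log
      · exact continuousOn_const.add hcont
      · intro y hy; exact (hpos y hy).ne'
    · apply continuousOn_const.mul
      apply (continuousOn_id).add
      have := continuousOn_primitive_interval (a := (0:ℝ)) (b := T) (μ := volume) (f := E) hEi
      rwa [uIcc_of_le hT.le] at this
  -- derivative on interior
  have hF' : ∀ x ∈ Ioo (0:ℝ) T, HasDerivAt F (deriv E x / (1 + E x) - C * (1 + E x)) x := by
    intro x hx
    have hxI : x ∈ Icc (0:ℝ) T := Ioo_subset_Icc_self hx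
    have hE' : HasDerivAt E (deriv E x) x := (hdiff x hxI).hasDerivAt
    have h1 : HasDerivAt (fun y => 1 + E y) (deriv E x) x := by
      exact hE'.const_add 1
    have hlog : HasDerivAt (fun y => Real.log (1 + E y)) (deriv E x / (1 + E x)) x :=
      h1.log (hpos x hxI).ne'
    have hintd : HasDerivAt (fun y => ∫ s in (0:ℝ)..y, E s) (E x) x := by
      apply integral_hasDerivAt_right
      · exact (hcont.mono (Icc_subset_Icc le_rfl hxI.2)).intervalIntegrable_of_Icc hxI.1
      · refine ContinuousAt.stronglyMeasurableAtFilter isOpen_Ioo ?_ x hx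
        intro y hy; exact (hdiff y (Ioo_subset_Icc_self hy)).continuousAt
      · exact (hdiff x hxI).continuousAt
    have h2 : HasDerivAt (fun y => C * (y + ∫ s in (0:ℝ)..y, E s)) (C * (1 + E x)) x :=
      ((hasDerivAt_id x).add hintd).const_mul C
    exact hlog.sub h2
  have hFanti : AntitoneOn F (Icc 0 T) := by
    apply antitoneOn_of_deriv_nonpos (convex_Icc 0 T) hFcont
    · intro x hx
      rw [interior_Icc] at hx
      exact ((hF' x hx).differentiableAt).differentiableWithinAt
    · intro x hx
      rw [interior_Icc] at hx
      rw [(hF' x hx).deriv]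
      have hxI : x ∈ Icc (0:ℝ) T := Ioo_subset_Icc_self hx
      have hEx : 0 ≤ E x := hnonneg x hxI
      have hp : (0:ℝ) < 1 + E x := hpos x hxI
      have key : E x ^ α ≤ (1 + E x) * (1 + E x) := by
        rcases le_or_gt (E x) 1 with h | h
        · have : E x ^ α ≤ 1 := Real.rpow_le_one hEx h hα₁.le
          nlinarith
        · have h2 : E x ^ α ≤ E x ^ (2:ℝ) :=
            Real.rpow_le_rpow_of_exponent_le h.le hα₂
          have h3 : E x ^ (2:ℝ) = E x * E x := by
            rw [Real.rpow_two]; ring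
          calc E x ^ α ≤ E x * E x := h3 ▸ h2
            _ ≤ (1 + E x) * (1 + E x) := by nlinarith
      have hd : deriv E x ≤ C * ((1 + E x) * (1 + E x)) := by
        calc deriv E x ≤ C * E x ^ α := hineq x hxI
        _ ≤ C * ((1 + E x) * (1 + E x)) := by
          exact mul_le_mul_of_nonneg_left key hC.le
      have : deriv E x / (1 + E x) ≤ C * (1 + E x) := by
        rw [div_le_iff₀ hp]
        calc deriv E x ≤ C * ((1 + E x) * (1 + E x)) := hd
          _ = C * (1 + E x) * (1 + E x) := by ring
      linarith
  -- conclude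
  intro t ht
  have hFt : F t ≤ F 0 := hFanti (left_mem_Icc.2 hT.le) ht ht.1
  have hintt : (∫ s in (0:ℝ)..t, E s) ≤ M := by
    have hsplit : (∫ s in (0:ℝ)..t, E s) + (∫ s in t..T, E s) = ∫ s in (0:ℝ)..T, E s := by
      apply intervalIntegral.integral_add_adjacent_intervals
      · exact (hcont.mono (Icc_subset_Icc le_rfl ht.2)).intervalIntegrable_of_Icc ht.1
      · exact (hcont.mono (Icc_subset_Icc ht.1 le_rfl)).intervalIntegrable_of_Icc ht.2
    have hnn : 0 ≤ ∫ s in t..T, E s := by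
      apply intervalIntegral.integral_nonneg ht.2
      intro u hu
      exact hnonneg u ⟨le_trans ht.1 hu.1, hu.2⟩
    linarith
  have hlog : Real.log (1 + E t) ≤ Real.log (1 + E 0) + C * (T + M) := by
    have h0 : (0:ℝ) ∈ Icc (0:ℝ) T := left_mem_Icc.2 hT.le
    have hint0 : (∫ s in (0:ℝ)..(0:ℝ), E s) = 0 := intervalIntegral.integral_same
    have hFt' : Real.log (1 + E t) - C * (t + ∫ s in (0:ℝ)..t, E s)
        ≤ Real.log (1 + E 0) - C * (0 + ∫ s in (0:ℝ)..(0:ℝ), E s) := hFt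
    rw [hint0] at hFt'
    have hmono : C * (t + ∫ s in (0:ℝ)..t, E s) ≤ C * (T + M) := by
      apply mul_le_mul_of_nonneg_left _ hC.le
      linarith [ht.2]
    linarith
  have h1 : 1 + E t ≤ (1 + E 0) * Real.exp (C * (T + M)) := by
    have := Real.exp_le_exp.2 hlog
    rw [Real.exp_log (hpos t ht), Real.exp_add, Real.exp_log (hpos 0 (left_mem_Icc.2 hT.le))] at this
    exact this
  linarith [hnonneg t ht]
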